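/- If V is a complete countably-normed space, then every weakly bounded subset of V' is strongly bounded. -/

import Mathlib

open scoped Pointwise

/-- If `V` is a complete countably-normed space, then every weakly bounded subset of `V'`
is strongly bounded. -/
theorem stmt17 {V : Type*} [AddCommGroup V] [Module ℝ V] [UniformSpace V]
    [IsUniformAddGroup V] [CompleteSpace V]
    (p : SeminormFamily ℝ V ℕ) (hp : WithSeminorms p) (hmono : Monotone p)
    (B : Set (V →L[ℝ] ℝ))
    (hweak : ∀ v : V, ∃ M : ℝ, ∀ f ∈ B, |f v| ≤ M) :
    ∀ D : Set V, Bornology.IsVonNBounded ℝ D → ∀ ε > (0 : ℝ),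
      ∃ lam > (0 : ℝ), B ⊆ lam • {f : V →L[ℝ] ℝ | ∀ v ∈ D, |f v| < ε} := by
  have hsmul : ContinuousSMul ℝ V := hp.continuousSMul
  -- The uniformity is countably generated, hence `V` is (pseudo)metrizable and complete,
  -- so it is a Baire space, hence barrelled.
  have hcg : (nhds (0 : V)).IsCountablyGenerated := by
    rw [p.withSeminorms_iff_nhds_eq_iInf.mp hp]
    exact Filter.iInf.isCountablyGenerated _
  have hcg' : (uniformity V).IsCountablyGenerated :=
    IsUniformAddGroup.uniformity_countably_generated
  have hbaire : BaireSpace V := by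
    letI := UniformSpace.pseudoMetricSpace V
    exact BaireSpace.of_completelyPseudoMetrizable
  have hbar : BarrelledSpace ℝ V := BaireSpace.instBarrelledSpace (𝕜₁ := ℝ)
  -- Banach-Steinhaus: the family `B` is uniformly equicontinuous.
  have hq : WithSeminorms fun _ : Fin 1 => normSeminorm ℝ ℝ := norm_withSeminorms ℝ ℝ
  have hequi : UniformEquicontinuous ((↑) ∘ (Subtype.val : B → V →L[ℝ] ℝ)) := by
    apply hq.banach_steinhaus
    intro _ x
    obtain ⟨M, hM⟩ := hweak x
    exact ⟨M, by rintro m ⟨f, rfl⟩; simpa [Real.norm_eq_abs] using hM f f.2⟩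
  -- Extract a neighborhood of `0` on which all `f ∈ B` are bounded by `1`.
  have hecont : EquicontinuousAt ((↑) ∘ (Subtype.val : B → V →L[ℝ] ℝ)) 0 :=
    hequi.equicontinuous 0
  have hU : ∀ᶠ v in nhds (0 : V), ∀ f : B, |(f : V →L[ℝ] ℝ) v| < 1 := by
    have := hecont {q : ℝ × ℝ | dist q.1 q.2 < 1} (Metric.dist_mem_uniformity one_pos)
    filter_upwards [this] with v hv f
    simpa [Real.dist_eq, abs_sub_comm] using hv f
  intro D hD ε hε
  obtain ⟨U, hUmem, hUbd⟩ := hU.exists_mem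
  obtain ⟨r, hr, hrabs⟩ := (hD hUmem).exists_pos
  have hbound : ∀ f ∈ B, ∀ v ∈ D, |f v| ≤ r := by
    intro f hf v hv
    have hsub : D ⊆ (r : ℝ) • U := hrabs r (by simp [abs_of_pos hr])
    obtain ⟨u, hu, rfl⟩ := hsub hv
    calc |f (r • u)| = r * |f u| := by
          simp [map_smul, abs_mul, abs_of_pos hr]
      _ ≤ r * 1 := by nlinarith [(hUbd u hu ⟨f, hf⟩ : |f u| < 1)]
      _ = r := mul_one r
  refine ⟨r / ε + 1, by positivity, fun f hf => ?_⟩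
  have hlam : (0 : ℝ) < r / ε + 1 := by positivity
  rw [Set.mem_smul_set_iff_inv_smul_mem₀ hlam.ne']
  intro v hv
  have h1 : |f v| ≤ r := hbound f hf v hv
  have : |((r / ε + 1)⁻¹ • f) v| = (r / ε + 1)⁻¹ * |f v| := by
    simp [abs_mul, abs_of_pos (inv_pos.mpr hlam)]
  rw [this]
  rw [inv_mul_lt_iff₀ hlam]
  have : (r / ε + 1) * ε = r + ε := by field_simp
  nlinarith
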